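/- Theorem 5.1 (Bellaïche's combinatorial lemma): Let a ≥ 1 be a natural number, let d = d(a) be the number of binary digits of a, let u = u(a) be the number of ones in the binary expansion of a, let z = z(a) = d − u be the number of zeros among those digits, and let v = v(a) be the 2-adic valuation of a. Then there exists a subset R of {0, 1, …, 2^{d+1} − 1} of cardinality 2^{z − v + 1} such that for every natural number n, the coefficient of X^a in the Dickson polynomial Polynomial.dickson 1 1 n over ZMod 2 equals 1 if and only if n mod 2^{d+1} lies in R. -/

import Mathlib

open Polynomial

-- bridge: land submask iff testBit submask
lemma land_eq_left_iff (t m : ℕ) :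
    t &&& m = t ↔ ∀ i, t.testBit i = true → m.testBit i = true := by
  constructor
  · intro h i ht
    have := congrArg (fun x => x.testBit i) h
    simp only [Nat.testBit_land, ht, Bool.true_and] at this
    exact this
  · intro h
    apply Nat.eq_of_testBit_eq
    intro i
    rw [Nat.testBit_land]
    cases hh : t.testBit i
    · simp
    · simp [h i hh]

-- Lucas mod 2
lemma choose_odd_iff : ∀ n k : ℕ, Nat.choose n k % 2 = 1 ↔ (k &&& n = k) := by
  intro n
  induction n using Nat.strong_induction_on with
  | _ n ih =>
    intro k
    rcases Nat.eq_zero_or_pos n with h0 | hpos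
    · subst h0
      rcases Nat.eq_zero_or_pos k with hk | hk
      · subst hk; simp
      · rw [Nat.choose_eq_zero_of_lt hk]
        simp only [Nat.zero_mod]
        constructor
        · omega
        · intro h
          rw [land_eq_left_iff] at h
          have : k = 0 := Nat.eq_of_testBit_eq (fun i => by
            cases hh : k.testBit i
            · simp
            · have := h i hh; simp at this)
          omega
    · have lucas := @Choose.choose_modEq_choose_mod_mul_choose_div_nat n k 2 ⟨Nat.prime_two⟩
      unfold Nat.ModEq at lucas
      rw [lucas, Nat.mul_mod]
      have ihh := ih (n / 2) (by omega) (k / 2)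
      rw [land_eq_left_iff] at ihh ⊢
      have hsplit : (∀ i, k.testBit i = true → n.testBit i = true) ↔
          ((k % 2 = 1 → n % 2 = 1) ∧ ∀ i, (k/2).testBit i = true → (n/2).testBit i = true) := by
        constructor
        · intro h
          constructor
          · intro hk1
            have := h 0 (by simp [hk1])
            simpa using this
          · intro i hi
            rw [Nat.testBit_div_two] at hi ⊢
            exact h _ hi
        · rintro ⟨h0, hs⟩ i hi
          match i with
          | 0 => simp at hi ⊢; exact h0 hi
          | (i+1) =>
            rw [Nat.testBit_add_one] at hi ⊢
            exact hs i hi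
      rw [hsplit, ← ihh]
      rcases Nat.mod_two_eq_zero_or_one n with hn | hn <;>
        rcases Nat.mod_two_eq_zero_or_one k with hk | hk <;>
          first
            | (simp only [hn, hk]; omega)
            | simp [hn, hk]


lemma land_mod_pow (t m d : ℕ) (ht : t < 2 ^ d) :
    t &&& m = t ↔ t &&& (m % 2 ^ d) = t := by
  have key : ∀ i, t.testBit i = true → (m % 2 ^ d).testBit i = m.testBit i := by
    intro i hi
    have hid : i < d := by
      by_contra hc
      have : t < 2 ^ i := lt_of_lt_of_le ht (Nat.pow_le_pow_right (by norm_num) (by omega))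
      rw [Nat.testBit_lt_two_pow this] at hi
      simp at hi
    simp [Nat.testBit_mod_two_pow, hid]
  rw [land_eq_left_iff, land_eq_left_iff]
  constructor
  · intro h i hi; rw [key i hi]; exact h i hi
  · intro h i hi; rw [← key i hi]; exact h i hi

lemma card_filter_shift (M c : ℕ) (hM : 0 < M) (p : ℕ → Prop) [DecidablePred p] :
    ((Finset.range M).filter (fun s => p ((c + s) % M))).card
      = ((Finset.range M).filter p).card := by
  have hmod : ∀ b < M, (c + (b + (M - c % M)) % M) % M = b := by
    intro b hb
    have e1 : (c + (M - c % M)) % M = 0 := by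
      have h2 : c % M < M := Nat.mod_lt _ hM
      have h3 := Nat.mod_add_div c M
      have : c + (M - c % M) = M * (c / M) + M := by omega
      rw [this, Nat.mul_add_mod, Nat.mod_self]
    have e2 : (c + (b + (M - c % M)) % M) % M = (c + (b + (M - c % M))) % M := by
      conv_rhs => rw [Nat.add_mod]
      rw [Nat.add_mod c ((b + (M - c % M)) % M), Nat.mod_mod_of_dvd _ (dvd_refl M)]
    have e3 : c + (b + (M - c % M)) = b + (c + (M - c % M)) := by omega
    rw [e2, e3, Nat.add_mod, e1, Nat.add_zero, Nat.mod_mod_of_dvd _ (dvd_refl M),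
      Nat.mod_eq_of_lt hb]
  apply Finset.card_bij (fun s _ => (c + s) % M)
  · intro s hs
    simp only [Finset.mem_filter, Finset.mem_range] at hs ⊢
    exact ⟨Nat.mod_lt _ hM, hs.2⟩
  · intro s1 h1 s2 h2 h
    simp only [Finset.mem_filter, Finset.mem_range] at h1 h2
    have : s1 % M = s2 % M := Nat.ModEq.add_left_cancel' c h
    rwa [Nat.mod_eq_of_lt h1.1, Nat.mod_eq_of_lt h2.1] at this
  · intro b hb
    simp only [Finset.mem_filter, Finset.mem_range] at hb
    refine ⟨(b + (M - c % M)) % M, ?_, hmod b hb.1⟩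
    simp only [Finset.mem_filter, Finset.mem_range]
    exact ⟨Nat.mod_lt _ hM, by rw [hmod b hb.1]; exact hb.2⟩


lemma sub_double (t s b : ℕ) (hb : b < 2) :
    t &&& (2 * s + b) = t ↔ ((t / 2) &&& s = t / 2 ∧ (t % 2 = 1 → b = 1)) := by
  have hdiv : (2 * s + b) / 2 = s := by omega
  have hmod : (2 * s + b) % 2 = b := by omega
  rw [land_eq_left_iff, land_eq_left_iff]
  constructor
  · intro h
    refine ⟨?_, ?_⟩
    · intro i hi
      rw [Nat.testBit_div_two] at hi
      have := h (i + 1) hi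
      rwa [Nat.testBit_add_one, hdiv] at this
    · intro ht
      have := h 0 (by simp [ht])
      simp [hmod] at this
      omega
  · rintro ⟨h1, h2⟩ i hi
    match i with
    | 0 =>
      simp only [Nat.testBit_zero, decide_eq_true_eq] at hi ⊢
      rw [hmod]
      exact h2 hi
    | (i + 1) =>
      rw [Nat.testBit_add_one, hdiv]
      rw [Nat.testBit_add_one] at hi
      exact h1 i hi

lemma card_filter_double (M : ℕ) (p : ℕ → Prop) [DecidablePred p] :
    ((Finset.range (2 * M)).filter p).card
      = ((Finset.range M).filter (fun x => p (2 * x))).card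
        + ((Finset.range M).filter (fun x => p (2 * x + 1))).card := by
  have hset : (Finset.range (2 * M)).filter p
      = ((Finset.range M).filter (fun x => p (2 * x))).image (fun x => 2 * x)
        ∪ ((Finset.range M).filter (fun x => p (2 * x + 1))).image (fun x => 2 * x + 1) := by
    ext y
    simp only [Finset.mem_filter, Finset.mem_range, Finset.mem_union, Finset.mem_image]
    constructor
    · rintro ⟨hy, hp⟩
      rcases Nat.even_or_odd y with ⟨x, hx⟩ | ⟨x, hx⟩
      · left; exact ⟨x, ⟨by omega, by rw [show 2 * x = y by omega]; exact hp⟩, by omega⟩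
      · right; exact ⟨x, ⟨by omega, by rw [show 2 * x + 1 = y by omega]; exact hp⟩, by omega⟩
    · rintro (⟨x, ⟨hx, hp⟩, rfl⟩ | ⟨x, ⟨hx, hp⟩, rfl⟩)
      · exact ⟨by omega, hp⟩
      · exact ⟨by omega, hp⟩
  rw [hset, Finset.card_union_of_disjoint, Finset.card_image_of_injective _ (fun a b h => by omega),
    Finset.card_image_of_injective _ (fun a b h => by omega)]
  · rw [Finset.disjoint_left]
    rintro y hy1 hy2
    simp only [Finset.mem_image] at hy1 hy2
    obtain ⟨x1, _, h1⟩ := hy1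
    obtain ⟨x2, _, h2⟩ := hy2
    omega

lemma count1_even (t : ℕ) (ht : t % 2 = 0) :
    (Nat.digits 2 t).count 1 = (Nat.digits 2 (t / 2)).count 1 := by
  rcases Nat.eq_zero_or_pos t with h | h
  · subst h; simp
  · rw [Nat.digits_def' one_lt_two h, List.count_cons, ht]
    simp

lemma count1_odd (t : ℕ) (ht : t % 2 = 1) :
    (Nat.digits 2 t).count 1 = (Nat.digits 2 (t / 2)).count 1 + 1 := by
  rw [Nat.digits_def' one_lt_two (by omega), List.count_cons, ht]
  simp

lemma card_submask : ∀ d : ℕ, ∀ t : ℕ, t < 2 ^ d →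
    ((Finset.range (2 ^ d)).filter (fun s => t &&& s = t)).card
      * 2 ^ ((Nat.digits 2 t).count 1) = 2 ^ d := by
  intro d
  induction d with
  | zero =>
    intro t ht
    have : t = 0 := by omega
    subst this
    simp [Nat.zero_and]
  | succ d ih =>
    intro t ht
    have h2 : (2 : ℕ) ^ (d + 1) = 2 * 2 ^ d := by ring
    have ht2 : t / 2 < 2 ^ d := by omega
    rw [h2, card_filter_double]
    rcases Nat.mod_two_eq_zero_or_one t with hpar | hpar
    · have e0 : ∀ x, (t &&& (2 * x) = t) ↔ ((t / 2) &&& x = t / 2) := by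
        intro x
        rw [show 2 * x = 2 * x + 0 by ring, sub_double t x 0 (by omega)]
        simp [hpar]
      have e1 : ∀ x, (t &&& (2 * x + 1) = t) ↔ ((t / 2) &&& x = t / 2) := by
        intro x
        rw [sub_double t x 1 (by omega)]
        simp
      rw [Finset.filter_congr (fun x _ => e0 x), Finset.filter_congr (fun x _ => e1 x),
        count1_even t hpar]
      have := ih (t / 2) ht2
      rw [add_mul, this]
      ring
    · have e0 : ∀ x, (t &&& (2 * x) = t) ↔ False := by
        intro x
        rw [show 2 * x = 2 * x + 0 by ring, sub_double t x 0 (by omega)]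
        simp [hpar]
      have e1 : ∀ x, (t &&& (2 * x + 1) = t) ↔ ((t / 2) &&& x = t / 2) := by
        intro x
        rw [sub_double t x 1 (by omega)]
        simp [hpar]
      rw [Finset.filter_congr (fun x _ => e0 x), Finset.filter_congr (fun x _ => e1 x),
        count1_odd t hpar]
      simp only [Finset.filter_false, Finset.card_empty, Nat.zero_add, pow_succ]
      have := ih (t / 2) ht2
      rw [← mul_assoc, this]
      ring

open Polynomial

lemma dickson_char_two_add_two (n : ℕ) :
    dickson 1 (1 : ZMod 2) (n + 2) = X * dickson 1 (1 : ZMod 2) (n + 1) + dickson 1 (1 : ZMod 2) n := by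
  rw [dickson_add_two, C_1, one_mul, CharTwo.sub_eq_add]

lemma dickson_zero' : dickson 1 (1 : ZMod 2) 0 = 0 := by
  rw [dickson_zero]
  norm_num
  exact CharTwo.two_eq_zero

lemma coeff_dickson_zero (n : ℕ) : (dickson 1 (1 : ZMod 2) n).coeff 0 = 0 := by
  induction n using Nat.strong_induction_on with
  | _ n ih =>
    match n with
    | 0 => rw [dickson_zero']; simp
    | 1 => rw [dickson_one]; simp
    | (m + 2) =>
      rw [dickson_char_two_add_two, coeff_add, coeff_X_mul_zero, ih m (by omega)]
      simp

lemma coeff_dickson (n : ℕ) : ∀ a : ℕ, 1 ≤ a →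
    (dickson 1 (1 : ZMod 2) n).coeff a =
      if n % 2 = a % 2 then (((((n + a) / 2 - 1).choose (a - 1)) : ℕ) : ZMod 2) else 0 := by
  induction n using Nat.strong_induction_on with
  | _ n ih =>
    match n with
    | 0 =>
      intro a ha
      rw [dickson_zero']
      simp only [coeff_zero]
      split_ifs with h
      · have ha2 : a % 2 = 0 := by omega
        rw [Nat.choose_eq_zero_of_lt (by omega)]
        simp
      · rfl
    | 1 =>
      intro a ha
      rw [dickson_one, coeff_X]
      split_ifs with h1 h2 h2
      · subst h1; norm_num
      · exfalso; subst h1; simp at h2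
      · -- a ≠ 1, parity matches: a odd ≥ 3
        have ha3 : 3 ≤ a := by omega
        rw [Nat.choose_eq_zero_of_lt (by omega)]
        simp
      · rfl
    | (m + 2) =>
      intro a ha
      obtain ⟨b, rfl⟩ : ∃ b, a = b + 1 := ⟨a - 1, by omega⟩
      rw [dickson_char_two_add_two, coeff_add, coeff_X_mul]
      match b with
      | 0 =>
        rw [coeff_dickson_zero, zero_add, ih m (by omega) 1 le_rfl]
        by_cases hp : m % 2 = 1 % 2
        · rw [if_pos hp, if_pos (by omega)]
          simp
        · rw [if_neg hp, if_neg (by omega)]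
      | (c + 1) =>
        rw [ih (m + 1) (by omega) (c + 1) (by omega), ih m (by omega) (c + 2) (by omega)]
        by_cases hp : m % 2 = (c + 2) % 2
        · rw [if_pos (show (m + 1) % 2 = (c + 1) % 2 by omega), if_pos hp,
            if_pos (show (m + 2) % 2 = (c + 1 + 1) % 2 by omega)]
          have h1 : (m + 1 + (c + 1)) / 2 - 1 = (m + c + 2) / 2 - 1 := by omega
          have h2 : (m + (c + 2)) / 2 - 1 = (m + c + 2) / 2 - 1 := by omega
          have h3 : (m + 2 + (c + 1 + 1)) / 2 - 1 = ((m + c + 2) / 2 - 1) + 1 := by omega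
          rw [h1, h2, h3]
          rw [show c + 1 + 1 - 1 = (c + 1 - 1) + 1 by omega]
          rw [Nat.choose_succ_succ ((m + c + 2) / 2 - 1) (c + 1 - 1)]
          rw [show c + 1 - 1 + 1 = c + 2 - 1 by omega]
          push_cast
          ring
        · rw [if_neg (by omega), if_neg (by omega), if_neg (by omega)]
          simp

lemma count1_even' (t : ℕ) (ht : t % 2 = 0) :
    (Nat.digits 2 t).count 1 = (Nat.digits 2 (t / 2)).count 1 := by
  rcases Nat.eq_zero_or_pos t with h | h
  · subst h; simp
  · rw [Nat.digits_def' one_lt_two h, List.count_cons, ht]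
    simp

lemma count1_odd' (t : ℕ) (ht : t % 2 = 1) :
    (Nat.digits 2 t).count 1 = (Nat.digits 2 (t / 2)).count 1 + 1 := by
  rw [Nat.digits_def' one_lt_two (by omega), List.count_cons, ht]
  simp

lemma len_succ (t : ℕ) (ht : 1 ≤ t) :
    (Nat.digits 2 t).length = (Nat.digits 2 (t / 2)).length + 1 := by
  rw [Nat.digits_def' one_lt_two ht]
  simp

lemma padic_even (b : ℕ) (hb : 1 ≤ b) :
    padicValNat 2 (2 * b) = padicValNat 2 b + 1 := by
  have := @padicValNat.mul 2 2 b ⟨Nat.prime_two⟩ (by norm_num) (by omega)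
  rw [this, padicValNat.self (by norm_num)]
  omega

lemma count_add_padic : ∀ a : ℕ, 1 ≤ a →
    (Nat.digits 2 (a - 1)).count 1 + 1 = (Nat.digits 2 a).count 1 + padicValNat 2 a := by
  intro a
  induction a using Nat.strong_induction_on with
  | _ a ih =>
    intro ha
    rcases Nat.lt_or_ge a 2 with h2 | h2
    · have : a = 1 := by omega
      subst this
      rw [padicValNat.eq_zero_of_not_dvd (by norm_num)]
      simp
    · rcases Nat.mod_two_eq_zero_or_one a with hpar | hpar
      · have hb : a = 2 * (a / 2) := by omega
        have h1 : (Nat.digits 2 a).count 1 = (Nat.digits 2 (a / 2)).count 1 :=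
          count1_even' a hpar
        have h2' : padicValNat 2 a = padicValNat 2 (a / 2) + 1 := by
          conv_lhs => rw [hb]
          exact padic_even _ (by omega)
        have h3 : (Nat.digits 2 (a - 1)).count 1 = (Nat.digits 2 ((a - 1) / 2)).count 1 + 1 :=
          count1_odd' _ (by omega)
        have h4 : (a - 1) / 2 = a / 2 - 1 := by omega
        rw [h4] at h3
        have := ih (a / 2) (by omega) (by omega)
        omega
      · have h1 : (Nat.digits 2 a).count 1 = (Nat.digits 2 (a / 2)).count 1 + 1 :=
          count1_odd' a hpar
        have h2' : padicValNat 2 a = 0 := padicValNat.eq_zero_of_not_dvd (by omega)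
        have h3 : (Nat.digits 2 (a - 1)).count 1 = (Nat.digits 2 ((a - 1) / 2)).count 1 :=
          count1_even' _ (by omega)
        have h4 : (a - 1) / 2 = a / 2 := by omega
        rw [h4] at h3
        omega

lemma count_padic_le_len : ∀ a : ℕ, 1 ≤ a →
    (Nat.digits 2 a).count 1 + padicValNat 2 a ≤ (Nat.digits 2 a).length := by
  intro a
  induction a using Nat.strong_induction_on with
  | _ a ih =>
    intro ha
    rcases Nat.lt_or_ge a 2 with h2 | h2
    · have : a = 1 := by omega
      subst this
      rw [padicValNat.eq_zero_of_not_dvd (by norm_num)]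
      simp
    · rcases Nat.mod_two_eq_zero_or_one a with hpar | hpar
      · have hb : a = 2 * (a / 2) := by omega
        have h1 : (Nat.digits 2 a).count 1 = (Nat.digits 2 (a / 2)).count 1 :=
          count1_even' a hpar
        have h2' : padicValNat 2 a = padicValNat 2 (a / 2) + 1 := by
          conv_lhs => rw [hb]
          exact padic_even _ (by omega)
        have h3 := len_succ a (by omega)
        have := ih (a / 2) (by omega) (by omega)
        omega
      · have h2' : padicValNat 2 a = 0 := padicValNat.eq_zero_of_not_dvd (by omega)
        have := List.count_le_length (a := 1) (l := Nat.digits 2 a)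
        omega

lemma coeff_eq_one_iff (a n : ℕ) (ha : 1 ≤ a) :
    (Polynomial.dickson 1 (1 : ZMod 2) n).coeff a = 1 ↔
      (n % 2 = a % 2 ∧ (a - 1) &&& ((n + a) / 2 - 1) = a - 1) := by
  rw [coeff_dickson n a ha, ← choose_odd_iff]
  split_ifs with h
  · rcases Nat.mod_two_eq_zero_or_one ((((n + a) / 2 - 1)).choose (a - 1)) with h0 | h1
    · rw [← ZMod.natCast_mod _ 2, h0]
      simp [h, h0]
    · rw [← ZMod.natCast_mod _ 2, h1]
      simp [h, h1]
  · simp [h]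

lemma coeff_mod (a n : ℕ) (ha : 1 ≤ a) :
    ((Polynomial.dickson 1 (1 : ZMod 2) n).coeff a = 1 ↔
      (Polynomial.dickson 1 (1 : ZMod 2)
        (n % 2 ^ ((Nat.digits 2 a).length + 1))).coeff a = 1) := by
  set d := (Nat.digits 2 a).length with hd
  set M := 2 ^ (d + 1) with hM
  set n' := n % M with hn'
  have hM2 : M = 2 * 2 ^ d := by rw [hM]; ring
  have ht : a - 1 < 2 ^ d := by
    have h1 : a < 2 ^ d := Nat.lt_base_pow_length_digits one_lt_two
    omega
  have hpar : n' % 2 = n % 2 := Nat.mod_mod_of_dvd n ⟨2 ^ d, hM2⟩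
  rw [coeff_eq_one_iff a n ha, coeff_eq_one_iff a n' ha]
  have key : n % 2 = a % 2 → ((n + a) / 2 - 1) % 2 ^ d = ((n' + a) / 2 - 1) % 2 ^ d := by
    intro hp
    have hq2 : n = 2 ^ d * (n / M) + 2 ^ d * (n / M) + n' := by
      conv_lhs => rw [(Nat.div_add_mod n M).symm]
      rw [hn', hM2]
      ring
    have h1 : (n + a) / 2 - 1 = 2 ^ d * (n / M) + ((n' + a) / 2 - 1) := by omega
    rw [h1, Nat.mul_add_mod]
  constructor
  · rintro ⟨h1, h2⟩
    refine ⟨by omega, ?_⟩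
    rw [land_mod_pow _ _ d ht] at h2
    rw [key h1] at h2
    rwa [land_mod_pow _ _ d ht]
  · rintro ⟨h1, h2⟩
    have h1' : n % 2 = a % 2 := by omega
    refine ⟨h1', ?_⟩
    rw [land_mod_pow _ _ d ht] at h2
    rw [← key h1'] at h2
    rwa [land_mod_pow _ _ d ht]

/-- Theorem 5.1 (Bellaïche's combinatorial lemma): writing `d`, `u`, `z`, `v` for
the number of binary digits of `a`, the number of ones, the number of zeros, and
the 2-adic valuation of `a`, the coefficient of `X^a` in the mod-2 Chebyshev
(Dickson) polynomial `S_n` is `1` exactly when `n` lies in one of `2^{z−v+1}`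
residue classes modulo `2^{d+1}`. -/
theorem bellaiche_combinatorial_lemma (a : ℕ) (ha : 1 ≤ a) :
    ∃ R : Finset ℕ,
      R ⊆ Finset.range (2 ^ ((Nat.digits 2 a).length + 1)) ∧
      R.card =
        2 ^ (((Nat.digits 2 a).length - (Nat.digits 2 a).count 1)
              - padicValNat 2 a + 1) ∧
      ∀ n : ℕ,
        ((Polynomial.dickson 1 (1 : ZMod 2) n).coeff a = 1 ↔
          n % 2 ^ ((Nat.digits 2 a).length + 1) ∈ R) := by
  set d := (Nat.digits 2 a).length with hd
  have ht : a - 1 < 2 ^ d := by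
    have h1 : a < 2 ^ d := Nat.lt_base_pow_length_digits one_lt_two
    omega
  have hM2 : (2 : ℕ) ^ (d + 1) = 2 * 2 ^ d := by ring
  refine ⟨(Finset.range (2 ^ (d + 1))).filter
      (fun r => (Polynomial.dickson 1 (1 : ZMod 2) r).coeff a = 1),
    Finset.filter_subset _ _, ?_, ?_⟩
  · rw [Finset.filter_congr (fun r _ => coeff_eq_one_iff a r ha)]
    have hbij : ((Finset.range (2 ^ (d + 1))).filter
          (fun r => r % 2 = a % 2 ∧ (a - 1) &&& ((r + a) / 2 - 1) = a - 1)).card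
        = ((Finset.range (2 ^ d)).filter
          (fun s => (a - 1) &&& ((a - 1) / 2 + s) = a - 1)).card := by
      apply Finset.card_bij (fun r _ => r / 2)
      · intro r hr
        simp only [Finset.mem_filter, Finset.mem_range] at hr ⊢
        obtain ⟨hrlt, hrpar, hrsub⟩ := hr
        refine ⟨by omega, ?_⟩
        have : (a - 1) / 2 + r / 2 = (r + a) / 2 - 1 := by omega
        rw [this]
        exact hrsub
      · intro r1 h1 r2 h2 h
        simp only [Finset.mem_filter, Finset.mem_range] at h1 h2
        omega
      · intro s hs
        simp only [Finset.mem_filter, Finset.mem_range] at hs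
        refine ⟨2 * s + a % 2, ?_, by omega⟩
        simp only [Finset.mem_filter, Finset.mem_range]
        refine ⟨by omega, by omega, ?_⟩
        have : (2 * s + a % 2 + a) / 2 - 1 = (a - 1) / 2 + s := by omega
        rw [this]
        exact hs.2
    rw [hbij,
      Finset.filter_congr (fun s _ => land_mod_pow (a - 1) ((a - 1) / 2 + s) d ht),
      card_filter_shift (2 ^ d) ((a - 1) / 2) (pow_pos two_pos d)
        (fun m => (a - 1) &&& m = a - 1)]
    have hcount := card_submask d (a - 1) ht
    have h1 := count_add_padic a ha
    have h2 := count_padic_le_len a ha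
    set x := (Nat.digits 2 (a - 1)).count 1 with hx
    have hpow : 2 ^ (d - x) * 2 ^ x = 2 ^ d := by
      rw [← pow_add]
      congr 1
      omega
    have hcard : ((Finset.range (2 ^ d)).filter (fun m => (a - 1) &&& m = a - 1)).card
        = 2 ^ (d - x) :=
      Nat.eq_of_mul_eq_mul_right (pow_pos two_pos x) (hcount.trans hpow.symm)
    rw [hcard]
    congr 1
    omega
  · intro n
    rw [coeff_mod a n ha]
    simp only [Finset.mem_filter, Finset.mem_range]
    constructor
    · intro h
      exact ⟨Nat.mod_lt n (pow_pos two_pos _), h⟩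
    · exact And.right
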